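/- Let f be a C^2 function on the positive cone Γ₊ in ℝⁿ that is homogeneous of degree one and strictly monotone increasing in each argument. Then the function f* defined by f*(x₁,...,xₙ) = -f(x₁⁻¹,...,xₙ⁻¹) is concave on Γ₊ if and only if for every x ∈ Γ₊ the matrix with entries ∂²f/∂xᵢ∂xⱼ(x) + 2(∂f/∂xᵢ)(x)·xᵢ⁻¹·δᵢⱼ is positive semidefinite. -/

import Mathlib

noncomputable section

/-- The open positive cone in `ℝⁿ`. -/
def posCone (n : ℕ) : Set (Fin n → ℝ) := {x | ∀ i, 0 < x i}

open Set Filter Topology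

namespace Stmt0Aux

variable {n : ℕ}

lemma isOpen_posCone : IsOpen (posCone n) := by
  have h : posCone n = ⋂ i, (fun x : Fin n → ℝ => x i) ⁻¹' Set.Ioi 0 := by
    ext x; simp [posCone, Set.mem_iInter]
  rw [h]
  exact isOpen_iInter_of_finite fun i => (isOpen_Ioi).preimage (continuous_apply i)

lemma clm_sum (L : (Fin n → ℝ) →L[ℝ] ℝ) (v : Fin n → ℝ) :
    L v = ∑ i, v i * L (Pi.single i 1) := by
  have hv : v = ∑ i, v i • (Pi.single i (1:ℝ) : Fin n → ℝ) := by
    funext j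
    rw [Finset.sum_apply]
    simp [Pi.single_apply]
  conv_lhs => rw [hv]
  rw [map_sum]
  simp [smul_eq_mul]

/-- the curve `t ↦ (zᵢ + t dᵢ)⁻¹`. -/
def gam (z d : Fin n → ℝ) (t : ℝ) : Fin n → ℝ := fun i => (z i + t * d i)⁻¹

lemma gam_mem (z d : Fin n → ℝ) {t : ℝ} (ht : ∀ i, 0 < z i + t * d i) :
    gam z d t ∈ posCone n := fun i => inv_pos.2 (ht i)

lemma hasDerivAt_gam (z d : Fin n → ℝ) {t : ℝ} (ht : ∀ i, 0 < z i + t * d i) :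
    HasDerivAt (gam z d) (fun i => -(d i) / (z i + t * d i) ^ 2) t := by
  apply hasDerivAt_pi.2
  intro i
  have h1 : HasDerivAt (fun s : ℝ => z i + s * d i) (d i) t :=
    (hasDerivAt_mul_const (d i)).const_add (z i)
  exact h1.inv (ht i).ne'

lemma hasDerivAt_gam1 (z d : Fin n → ℝ) {t : ℝ} (ht : ∀ i, 0 < z i + t * d i) :
    HasDerivAt (fun s => fun i => -(d i) / (z i + s * d i) ^ 2)
      (fun i => 2 * d i ^ 2 * ((z i + t * d i)⁻¹) ^ 3) t := by
  apply hasDerivAt_pi.2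
  intro i
  have h1 : HasDerivAt (fun s : ℝ => z i + s * d i) (d i) t :=
    (hasDerivAt_mul_const (d i)).const_add (z i)
  have h2 := ((h1.pow 2).inv (pow_ne_zero 2 (ht i).ne')).const_mul (-(d i))
  have e : 2 * d i ^ 2 * ((z i + t * d i)⁻¹) ^ 3
      = -(d i) * (-(((2:ℕ):ℝ) * (z i + t * d i) ^ (2 - 1) * d i) / ((z i + t * d i) ^ 2) ^ 2) := by
    have h0 : z i + t * d i ≠ 0 := (ht i).ne'
    norm_num
    field_simp
  rw [e]
  simpa only [div_eq_mul_inv, neg_mul, mul_neg, Pi.inv_apply, Pi.pow_apply] using h2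

end Stmt0Aux

namespace Stmt0Aux

variable {n : ℕ} {f : (Fin n → ℝ) → ℝ}

lemma hasDerivAt_curve (hf : ContDiffOn ℝ 2 f (posCone n)) (z d : Fin n → ℝ) {t : ℝ}
    (ht : ∀ i, 0 < z i + t * d i) :
    HasDerivAt (fun s => f (gam z d s))
      (fderiv ℝ f (gam z d t) (fun i => -(d i) / (z i + t * d i) ^ 2)) t := by
  have hmem := gam_mem z d ht
  have hdf : HasFDerivAt f (fderiv ℝ f (gam z d t)) (gam z d t) :=
    ((hf.contDiffAt (isOpen_posCone.mem_nhds hmem)).differentiableAt two_ne_zero).hasFDerivAt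
  exact hdf.comp_hasDerivAt t (hasDerivAt_gam z d ht)

lemma hasDerivAt_curve2 (hf : ContDiffOn ℝ 2 f (posCone n)) (z d : Fin n → ℝ) {t : ℝ}
    (ht : ∀ i, 0 < z i + t * d i) :
    HasDerivAt (fun s => fderiv ℝ f (gam z d s) (fun i => -(d i) / (z i + s * d i) ^ 2))
      (fderiv ℝ (fderiv ℝ f) (gam z d t) (fun i => d i * (gam z d t i) ^ 2)
          (fun i => d i * (gam z d t i) ^ 2)
        + 2 * ∑ i, fderiv ℝ f (gam z d t) (Pi.single i 1) * (gam z d t i)⁻¹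
            * (d i * (gam z d t i) ^ 2) ^ 2) t := by
  have hmem := gam_mem z d ht
  have hc2 : ContDiffAt ℝ 2 f (gam z d t) := hf.contDiffAt (isOpen_posCone.mem_nhds hmem)
  have hdf2 : HasFDerivAt (fderiv ℝ f) (fderiv ℝ (fderiv ℝ f) (gam z d t)) (gam z d t) :=
    ((hc2.fderiv_right (le_refl _)).differentiableAt one_ne_zero).hasFDerivAt
  have hF : HasDerivAt (fun s => fderiv ℝ f (gam z d s))
      (fderiv ℝ (fderiv ℝ f) (gam z d t) (fun i => -(d i) / (z i + t * d i) ^ 2)) t :=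
    hdf2.comp_hasDerivAt t (hasDerivAt_gam z d ht)
  have hG := hasDerivAt_gam1 z d ht
  have hcomb := hF.clm_apply hG
  -- now rewrite the derivative value into the desired form
  have hξ : (fun i => -(d i) / (z i + t * d i) ^ 2)
      = -(fun i => d i * (gam z d t i) ^ 2) := by
    funext i
    simp only [Pi.neg_apply, gam, div_eq_mul_inv, inv_pow, neg_mul]
  have e1 : fderiv ℝ (fderiv ℝ f) (gam z d t) (fun i => -(d i) / (z i + t * d i) ^ 2)
        (fun i => -(d i) / (z i + t * d i) ^ 2)
      = fderiv ℝ (fderiv ℝ f) (gam z d t) (fun i => d i * (gam z d t i) ^ 2)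
        (fun i => d i * (gam z d t i) ^ 2) := by
    rw [hξ]
    simp [map_neg]
  have e2 : fderiv ℝ f (gam z d t) (fun i => 2 * d i ^ 2 * ((z i + t * d i)⁻¹) ^ 3)
      = 2 * ∑ i, fderiv ℝ f (gam z d t) (Pi.single i 1) * (gam z d t i)⁻¹
            * (d i * (gam z d t i) ^ 2) ^ 2 := by
    rw [clm_sum, Finset.mul_sum]
    refine Finset.sum_congr rfl fun i _ => ?_
    have h0 : z i + t * d i ≠ 0 := (ht i).ne'
    simp only [gam]
    field_simp
  rw [← e1, ← e2]
  exact hcomb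

end Stmt0Aux

namespace Stmt0Aux

variable {n : ℕ}

lemma convex_posCone : Convex ℝ (posCone n) := by
  intro x hx y hy a b ha hb hab
  intro i
  simp only [Pi.add_apply, Pi.smul_apply, smul_eq_mul]
  rcases ha.lt_or_eq with h | h
  · exact add_pos_of_pos_of_nonneg (mul_pos h (hx i)) (mul_nonneg hb (hy i).le)
  · have hb1 : b = 1 := by linarith
    simp [← h, hb1]
    exact hy i

/-- parameter set of the segment staying in the cone -/
def Tset (z d : Fin n → ℝ) : Set ℝ := {t | ∀ i, 0 < z i + t * d i}

lemma isOpen_Tset (z d : Fin n → ℝ) : IsOpen (Tset z d) := by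
  have h : Tset z d = ⋂ i, (fun t : ℝ => z i + t * d i) ⁻¹' Set.Ioi 0 := by
    ext t; simp [Tset, Set.mem_iInter]
  rw [h]
  exact isOpen_iInter_of_finite fun i =>
    isOpen_Ioi.preimage (by continuity)

lemma convex_Tset (z d : Fin n → ℝ) : Convex ℝ (Tset z d) := by
  intro t ht s hs a b ha hb hab
  intro i
  have key : z i + (a • t + b • s) * d i
      = a * (z i + t * d i) + b * (z i + s * d i) := by
    simp only [smul_eq_mul]
    linear_combination (z i) * hab.symm
  rw [key]
  rcases ha.lt_or_eq with h | h
  · exact add_pos_of_pos_of_nonneg (mul_pos h (ht i)) (mul_nonneg hb (hs i).le)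
  · have hb1 : b = 1 := by linarith
    simp [← h, hb1]
    exact hs i

lemma deriv_nonneg_of_monotoneOn {φ : ℝ → ℝ} {ε A : ℝ} (hε : 0 < ε)
    (hm : MonotoneOn φ (Icc (-ε) ε)) (hd : HasDerivAt φ A 0) : 0 ≤ A := by
  have h := hasDerivAt_iff_tendsto_slope.1 hd
  have h2 : Tendsto (slope φ 0) (𝓝[>] 0) (𝓝 A) :=
    h.mono_left (nhdsWithin_mono _ fun y hy => Set.mem_compl_singleton_iff.2 (ne_of_gt hy))
  refine ge_of_tendsto h2 ?_
  filter_upwards [Ioo_mem_nhdsGT hε] with y hy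
  have h0 : (0:ℝ) ∈ Icc (-ε) ε := ⟨by linarith, hε.le⟩
  have hyI : y ∈ Icc (-ε) ε := ⟨by linarith [hy.1], hy.2.le⟩
  have hle := hm h0 hyI hy.1.le
  rw [slope_def_field]
  apply div_nonneg (by linarith) (by linarith [hy.1])

end Stmt0Aux
theorem stmt0 {n : ℕ} (f : (Fin n → ℝ) → ℝ)
    (hf : ContDiffOn ℝ 2 f (posCone n))
    (hhom : ∀ c : ℝ, 0 < c → ∀ x ∈ posCone n, f (c • x) = c * f x)
    (hmono : ∀ x ∈ posCone n, ∀ i, 0 < fderiv ℝ f x (Pi.single i 1)) :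
    ConcaveOn ℝ (posCone n) (fun z => -f (fun i => (z i)⁻¹)) ↔
      ∀ x ∈ posCone n, ∀ ξ : Fin n → ℝ,
        0 ≤ fderiv ℝ (fderiv ℝ f) x ξ ξ
          + 2 * ∑ i, fderiv ℝ f x (Pi.single i 1) * (x i)⁻¹ * (ξ i) ^ 2 := by
  open Stmt0Aux Set Filter Topology in
  constructor
  · -- concave → pointwise condition
    intro hc x hx ξ
    obtain ⟨z, hz⟩ : ∃ z : Fin n → ℝ, z = fun i => (x i)⁻¹ := ⟨_, rfl⟩
    obtain ⟨d, hd⟩ : ∃ d : Fin n → ℝ, d = fun i => ξ i / (x i) ^ 2 := ⟨_, rfl⟩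
    have h0T : (0:ℝ) ∈ Tset z d := by
      intro i
      simp only [hz, zero_mul, add_zero]
      exact inv_pos.2 (hx i)
    obtain ⟨δ, hδ, hball⟩ := Metric.isOpen_iff.1 (isOpen_Tset z d) 0 h0T
    have hIccT : Icc (-(δ/2)) (δ/2) ⊆ Tset z d := by
      intro t ht
      apply hball
      rw [Metric.mem_ball, Real.dist_eq, sub_zero, abs_lt]
      exact ⟨by linarith [ht.1], by linarith [ht.2]⟩
    have hconv : ConvexOn ℝ (Icc (-(δ/2)) (δ/2)) (fun t => f (gam z d t)) := by
      refine ⟨convex_Icc _ _, ?_⟩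
      intro t ht s hs a b ha hb hab
      have hpt : (fun i => z i + t * d i) ∈ posCone n := fun i => hIccT ht i
      have hps : (fun i => z i + s * d i) ∈ posCone n := fun i => hIccT hs i
      have hkey := hc.2 hpt hps ha hb hab
      have e1 : (a • (fun i => z i + t * d i) + b • (fun i => z i + s * d i) : Fin n → ℝ)
          = fun i => z i + (a * t + b * s) * d i := by
        funext i
        simp only [Pi.add_apply, Pi.smul_apply, smul_eq_mul]
        linear_combination (z i) * hab
      rw [e1] at hkey
      simp only [smul_eq_mul] at hkey
      show f (fun i => (z i + (a • t + b • s) * d i)⁻¹)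
          ≤ a • f (fun i => (z i + t * d i)⁻¹) + b • f (fun i => (z i + s * d i)⁻¹)
      simp only [smul_eq_mul]
      linarith [hkey]
    have hmonoD := hconv.monotoneOn_deriv (fun t htI =>
      (hasDerivAt_curve hf z d (fun i => hIccT htI i)).differentiableAt)
    have hmono2 : MonotoneOn
        (fun s => fderiv ℝ f (gam z d s) (fun i => -(d i) / (z i + s * d i) ^ 2))
        (Icc (-(δ/2)) (δ/2)) :=
      hmonoD.congr (fun t htI => (hasDerivAt_curve hf z d (fun i => hIccT htI i)).deriv)
    have hd2 := hasDerivAt_curve2 hf z d (fun i => h0T i)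
    have hQ := deriv_nonneg_of_monotoneOn (by linarith : (0:ℝ) < δ/2) hmono2 hd2
    have hg0 : gam z d 0 = x := by
      funext i; simp [gam, hz]
    have hξi : ∀ i, d i * (x i) ^ 2 = ξ i := by
      intro i
      rw [hd]
      exact div_mul_cancel₀ _ (pow_ne_zero 2 (hx i).ne')
    rw [hg0] at hQ
    simp only [hξi] at hQ
    exact hQ
  · -- pointwise condition → concave
    intro h
    refine ⟨convex_posCone, ?_⟩
    intro p hp q hq a b ha hb hab
    obtain ⟨d, hd⟩ : ∃ d : Fin n → ℝ, d = fun i => q i - p i := ⟨_, rfl⟩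
    have h0T : (0:ℝ) ∈ Tset p d := fun i => by simpa using hp i
    have h1T : (1:ℝ) ∈ Tset p d := fun i => by
      have := hq i; simp [hd]; linarith
    have hconc : ConcaveOn ℝ (Tset p d) (fun t => -f (gam p d t)) := by
      apply concaveOn_of_deriv2_nonpos (convex_Tset p d)
      · intro t htT
        exact ((hasDerivAt_curve hf p d htT).neg.continuousAt).continuousWithinAt
      · rw [(isOpen_Tset p d).interior_eq]
        intro t htT
        exact ((hasDerivAt_curve hf p d htT).neg.differentiableAt).differentiableWithinAt
      · rw [(isOpen_Tset p d).interior_eq]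
        intro t htT
        have heq : deriv (fun s => -f (gam p d s)) =ᶠ[𝓝 t]
            (fun s => -(fderiv ℝ f (gam p d s) (fun i => -(d i) / (p i + s * d i) ^ 2))) := by
          filter_upwards [(isOpen_Tset p d).mem_nhds htT] with s hsT
          exact ((hasDerivAt_curve hf p d hsT).neg).deriv
        have hdiff : DifferentiableAt ℝ
            (fun s => -(fderiv ℝ f (gam p d s) (fun i => -(d i) / (p i + s * d i) ^ 2))) t :=
          ((hasDerivAt_curve2 hf p d htT).neg).differentiableAt
        exact (hdiff.congr_of_eventuallyEq heq).differentiableWithinAt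
      · rw [(isOpen_Tset p d).interior_eq]
        intro t htT
        have heq : deriv (fun s => -f (gam p d s)) =ᶠ[𝓝 t]
            (fun s => -(fderiv ℝ f (gam p d s) (fun i => -(d i) / (p i + s * d i) ^ 2))) := by
          filter_upwards [(isOpen_Tset p d).mem_nhds htT] with s hsT
          exact ((hasDerivAt_curve hf p d hsT).neg).deriv
        have h2 : deriv^[2] (fun s => -f (gam p d s)) t
            = deriv (fun s => -(fderiv ℝ f (gam p d s)
                (fun i => -(d i) / (p i + s * d i) ^ 2))) t := by
          show deriv (deriv (fun s => -f (gam p d s))) t = _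
          exact heq.deriv_eq
        rw [h2, deriv.fun_neg, (hasDerivAt_curve2 hf p d htT).deriv, neg_nonpos]
        exact h (gam p d t) (gam_mem p d htT) (fun i => d i * (gam p d t i) ^ 2)
    have hfin := hconc.2 h0T h1T ha hb hab
    simp only [smul_eq_mul, mul_zero, mul_one, zero_add] at hfin
    have e0 : gam p d 0 = fun i => (p i)⁻¹ := by funext i; simp [gam]
    have e1 : gam p d 1 = fun i => (q i)⁻¹ := by funext i; simp [gam, hd]
    have eb : gam p d b = fun i => ((a • p + b • q : Fin n → ℝ) i)⁻¹ := by
      funext i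
      simp only [gam, Pi.add_apply, Pi.smul_apply, smul_eq_mul, hd]
      congr 1
      linear_combination (-(p i)) * hab
    rw [e0, e1, eb] at hfin
    simp only [smul_eq_mul]
    exact hfin
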